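/- arXiv:2102.12282 — 2 statements merged into one kernel-verified Lean document; each statement's English description precedes it below -/
import Mathlib

section
/- As α → 0⁺, the Rényi pseudodistance R_α(f,g) = (1/(α+1)) log ∫ f^{α+1} + (1/(α(α+1))) log ∫ g^{α+1} − (1/α) log ∫ f^α g converges to the Kullback–Leibler divergence ∫ g log(g/f). -/
open Real MeasureTheory Filter Set

lemma slope_mono {t a b : ℝ} (ht : 0 < t) (ha : 0 < a) (hab : a ≤ b) :
    (t ^ a - 1) / a ≤ (t ^ b - 1) / b := by
  have hb : 0 < b := ha.trans_le hab
  have hc0 : (0:ℝ) ≤ a / b := by positivity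
  have hc1 : (0:ℝ) ≤ 1 - a / b := by
    have : a / b ≤ 1 := (div_le_one hb).2 hab
    linarith
  have h2 : Real.exp ((a/b) * (b * Real.log t) + (1 - a/b) * 0)
      ≤ (a/b) * Real.exp (b * Real.log t) + (1 - a/b) * Real.exp 0 := by
    have := convexOn_exp.2 (Set.mem_univ (b * Real.log t)) (Set.mem_univ (0:ℝ))
      hc0 hc1 (by ring)
    simpa [smul_eq_mul] using this
  have harg : (a/b) * (b * Real.log t) + (1 - a/b) * 0 = Real.log t * a := by
    field_simp; ring
  rw [harg, Real.exp_zero, mul_comm b (Real.log t), ← Real.rpow_def_of_pos ht,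
    ← Real.rpow_def_of_pos ht] at h2
  have key : t ^ a - 1 ≤ (a/b) * (t ^ b - 1) := by
    have : (a/b) * (t ^ b - 1) = (a/b) * t ^ b + (1 - a/b) - 1 := by ring
    linarith
  rw [div_le_div_iff₀ ha hb]
  have h3 := mul_le_mul_of_nonneg_right key hb.le
  have h4 : (a/b) * (t ^ b - 1) * b = (t ^ b - 1) * a := by
    field_simp
  linarith

lemma log_le_slope {t a : ℝ} (ht : 0 < t) (ha : 0 < a) :
    Real.log t ≤ (t ^ a - 1) / a := by
  rw [le_div_iff₀ ha]
  have h := Real.add_one_le_exp (a * Real.log t)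
  rw [mul_comm a (Real.log t), ← Real.rpow_def_of_pos ht] at h
  linarith

lemma slope_tendsto {t : ℝ} (ht : 0 < t) {a : ℕ → ℝ} (ha : ∀ n, a n ≠ 0)
    (hlim : Tendsto a atTop (nhds 0)) :
    Tendsto (fun n => (t ^ (a n) - 1) / a n) atTop (nhds (Real.log t)) := by
  have hd : HasDerivAt (fun s : ℝ => t ^ s) (Real.log t) 0 := by
    simpa [Real.rpow_zero] using (hasStrictDerivAt_const_rpow ht 0).hasDerivAt
  have hs := hasDerivAt_iff_tendsto_slope.1 hd
  have hat : Tendsto a atTop (nhdsWithin 0 {(0:ℝ)}ᶜ) :=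
    tendsto_nhdsWithin_iff.2 ⟨hlim, Eventually.of_forall fun n => ha n⟩
  refine (hs.comp hat).congr fun n => ?_
  simp [Function.comp, slope_def_field, Real.rpow_zero]

lemma integrable_mul_log {g : ℝ → ℝ} {D : ℝ} (hg_pos : ∀ x, 0 < g x)
    (hg_prob : ∫ x, g x = 1)
    (hG : HasDerivAt (fun α : ℝ => ∫ x, g x ^ (α + 1)) D 0) :
    Integrable (fun x => g x * Real.log (g x)) := by
  set G : ℝ → ℝ := fun α : ℝ => ∫ x, g x ^ (α + 1) with hGdef
  have hg_int : Integrable g := by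
    by_contra hcon
    rw [integral_undef hcon] at hg_prob; norm_num at hg_prob
  have hG0 : G 0 = 1 := by
    simpa [hGdef, Real.rpow_one] using hg_prob
  have hne : ∀ᶠ α in nhds (0:ℝ), G α ≠ 0 :=
    hG.continuousAt.eventually_ne (by rw [hG0]; norm_num)
  obtain ⟨ε, hε, hball⟩ := Metric.eventually_nhds_iff.1 hne
  set a : ℕ → ℝ := fun n => ε / 2 / (n + 1) with hadef
  have hapos : ∀ n, 0 < a n := fun n => by positivity
  have hasmall : ∀ n, a n < ε := fun n => by
    have h1 : (1:ℝ) ≤ (n:ℝ) + 1 := by exact_mod_cast Nat.one_le_iff_ne_zero.2 (Nat.succ_ne_zero n)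
    calc a n ≤ ε / 2 / 1 := by
          apply div_le_div_of_nonneg_left (by positivity) (by norm_num) h1
      _ < ε := by linarith
  have hamono : Antitone a := by
    intro n m hnm
    apply div_le_div_of_nonneg_left (by positivity) (by positivity)
    have : (n:ℝ) ≤ m := Nat.cast_le.2 hnm
    linarith
  have hatend : Tendsto a atTop (nhds 0) := by
    apply Tendsto.div_atTop (tendsto_const_nhds)
    exact tendsto_atTop_add_const_right _ 1 tendsto_natCast_atTop_atTop
  have hGint : ∀ n, Integrable (fun x => g x ^ (a n + 1)) := by
    intro n
    by_contra hcon
    exact hball (by simpa [Real.dist_eq, abs_of_pos (hapos n)] using hasmall n)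
      (integral_undef hcon)
  set h : ℕ → ℝ → ℝ := fun n x => (g x ^ (a n + 1) - g x) / a n with hhdef
  have hint : ∀ n, Integrable (h n) := fun n => ((hGint n).sub hg_int).div_const _
  have hrw : ∀ n x, h n x = g x * ((g x ^ (a n) - 1) / a n) := by
    intro n x
    have : g x ^ (a n + 1) = g x ^ (a n) * g x := by
      rw [Real.rpow_add (hg_pos x), Real.rpow_one]
    rw [hhdef]; simp only [this]; ring
  have hmono : ∀ x, Antitone fun n => h n x := by
    intro x n m hnm
    show h m x ≤ h n x
    rw [hrw, hrw]
    exact mul_le_mul_of_nonneg_left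
      (slope_mono (hg_pos x) (hapos m) (hamono hnm)) (hg_pos x).le
  have hlb : ∀ n x, g x * Real.log (g x) ≤ h n x := by
    intro n x
    rw [hrw]
    exact mul_le_mul_of_nonneg_left (log_le_slope (hg_pos x) (hapos n)) (hg_pos x).le
  have htend : ∀ x, Tendsto (fun n => h n x) atTop (nhds (g x * Real.log (g x))) := by
    intro x
    have := (slope_tendsto (hg_pos x) (fun n => (hapos n).ne') hatend).const_mul (g x)
    refine this.congr fun n => (hrw n _).symm
  -- integrals of h n tend to D
  have hInt_eq : ∀ n, ∫ x, h n x = (G (a n) - G 0) / (a n - 0) := by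
    intro n
    rw [hhdef]
    simp only [integral_div]
    rw [integral_sub (hGint n) hg_int, hG0, hg_prob, sub_zero]
  have hInt_tendsto : Tendsto (fun n => ∫ x, h n x) atTop (nhds D) := by
    have hs := hasDerivAt_iff_tendsto_slope.1 hG
    have hat : Tendsto a atTop (nhdsWithin 0 {(0:ℝ)}ᶜ) :=
      tendsto_nhdsWithin_iff.2 ⟨hatend, Eventually.of_forall fun n => (hapos n).ne'⟩
    refine (hs.comp hat).congr fun n => ?_
    rw [hInt_eq n]
    simp [slope_def_field, Function.comp]
  obtain ⟨C, hC⟩ := hInt_tendsto.bddBelow_range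
  have hCle : ∀ n, C ≤ ∫ x, h n x := fun n => hC ⟨n, rfl⟩
  -- monotone convergence for φ n = h 0 - h n
  set ψ : ℝ → ℝ := fun x => h 0 x - g x * Real.log (g x) with hψdef
  set φ : ℕ → ℝ → ℝ := fun n x => h 0 x - h n x with hφdef
  have hφ_int : ∀ n, Integrable (φ n) := fun n => (hint 0).sub (hint n)
  have hφ_nonneg : ∀ n x, 0 ≤ φ n x := fun n x => sub_nonneg.2 (hmono x (Nat.zero_le n))
  have hψ_nonneg : ∀ x, 0 ≤ ψ x := fun x => sub_nonneg.2 (hlb 0 x)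
  have hφψ : ∀ x, Tendsto (fun n => φ n x) atTop (nhds (ψ x)) :=
    fun x => tendsto_const_nhds.sub (htend x)
  have hlim : Tendsto (fun n => ∫⁻ x, ENNReal.ofReal (φ n x)) atTop
      (nhds (∫⁻ x, ENNReal.ofReal (ψ x))) := by
    apply lintegral_tendsto_of_tendsto_of_monotone
    · exact fun n => ENNReal.measurable_ofReal.comp_aemeasurable (hφ_int n).aemeasurable
    · refine Eventually.of_forall fun x n m hnm => ?_
      exact ENNReal.ofReal_le_ofReal (by
        simp only [hφdef]
        exact sub_le_sub_left (hmono x hnm) _)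
    · exact Eventually.of_forall fun x => (ENNReal.continuous_ofReal.tendsto _).comp (hφψ x)
  have hφ_lint : ∀ n, ∫⁻ x, ENNReal.ofReal (φ n x) = ENNReal.ofReal (∫ x, φ n x) :=
    fun n => (ofReal_integral_eq_lintegral_ofReal (hφ_int n)
      (Eventually.of_forall (hφ_nonneg n))).symm
  have hbound : ∫⁻ x, ENNReal.ofReal (ψ x) ≤ ENNReal.ofReal ((∫ x, h 0 x) - C) := by
    refine le_of_tendsto hlim (Eventually.of_forall fun n => ?_)
    rw [hφ_lint n]
    apply ENNReal.ofReal_le_ofReal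
    rw [hφdef]
    simp only
    rw [integral_sub (hint 0) (hint n)]
    exact sub_le_sub_left (hCle n) _
  have hψ_meas : AEStronglyMeasurable ψ volume := by
    apply AEStronglyMeasurable.sub (hint 0).aestronglyMeasurable
    exact (hg_int.aemeasurable.mul
      (Real.measurable_log.comp_aemeasurable hg_int.aemeasurable)).aestronglyMeasurable
  have hψ_int : Integrable ψ := by
    refine ⟨hψ_meas, ?_⟩
    rw [hasFiniteIntegral_iff_ofReal (Eventually.of_forall hψ_nonneg)]
    exact lt_of_le_of_lt hbound ENNReal.ofReal_lt_top
  have : (fun x => g x * Real.log (g x)) = fun x => h 0 x - ψ x := by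
    funext x; simp [hψdef]
  rw [this]
  exact (hint 0).sub hψ_int

/-- As `α → 0⁺`, the Rényi pseudodistance
`R_α(f,g) = (1/(α+1)) log ∫ f^{α+1} + (1/(α(α+1))) log ∫ g^{α+1} − (1/α) log ∫ f^α g`
converges to the Kullback–Leibler divergence `∫ g log(g/f)`.
The regularity conditions (differentiability in `α` near `0` with differentiation under the
integral sign) are encoded as `HasDerivAt`/continuity hypotheses for the integral functionals. -/
theorem stmt_2 (f g : ℝ → ℝ)
    (hf_pos : ∀ x, 0 < f x) (hg_pos : ∀ x, 0 < g x)
    (hf_prob : ∫ x, f x = 1) (hg_prob : ∫ x, g x = 1)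
    (hF_cont : ContinuousAt (fun α : ℝ => ∫ x, f x ^ (α + 1)) 0)
    (hG_deriv : HasDerivAt (fun α : ℝ => ∫ x, g x ^ (α + 1))
      (∫ x, g x * Real.log (g x)) 0)
    (hFG_deriv : HasDerivAt (fun α : ℝ => ∫ x, f x ^ α * g x)
      (∫ x, g x * Real.log (f x)) 0)
    (hKL : Integrable (fun x => g x * Real.log (g x / f x))) :
    Tendsto (fun α : ℝ =>
        (1 / (α + 1)) * Real.log (∫ x, f x ^ (α + 1)) +
        (1 / (α * (α + 1))) * Real.log (∫ x, g x ^ (α + 1)) -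
        (1 / α) * Real.log (∫ x, f x ^ α * g x))
      (nhdsWithin 0 (Ioi 0))
      (nhds (∫ x, g x * Real.log (g x / f x))) := by
  set Dg : ℝ := ∫ x, g x * Real.log (g x) with hDg
  set Df : ℝ := ∫ x, g x * Real.log (f x) with hDf
  -- integrability and KL decomposition
  have hgg_int : Integrable (fun x => g x * Real.log (g x)) :=
    integrable_mul_log hg_pos hg_prob hG_deriv
  have hgf_eq : (fun x => g x * Real.log (f x))
      = fun x => g x * Real.log (g x) - g x * Real.log (g x / f x) := by
    funext x
    rw [Real.log_div (hg_pos x).ne' (hf_pos x).ne']; ring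
  have hgf_int : Integrable (fun x => g x * Real.log (f x)) := by
    rw [hgf_eq]; exact hgg_int.sub hKL
  have hKL_eq : (∫ x, g x * Real.log (g x / f x)) = Dg - Df := by
    rw [hDg, hDf, ← integral_sub hgg_int hgf_int]
    congr 1; funext x
    rw [Real.log_div (hg_pos x).ne' (hf_pos x).ne']; ring
  -- values at 0
  have hF0 : (∫ x, f x ^ ((0:ℝ) + 1)) = 1 := by
    simpa [Real.rpow_one] using hf_prob
  have hG0 : (∫ x, g x ^ ((0:ℝ) + 1)) = 1 := by
    simpa [Real.rpow_one] using hg_prob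
  have hH0 : (∫ x, f x ^ (0:ℝ) * g x) = 1 := by
    simpa [Real.rpow_zero] using hg_prob
  -- Term 1
  have hT1 : Tendsto (fun α : ℝ => (1 / (α + 1)) * Real.log (∫ x, f x ^ (α + 1)))
      (nhdsWithin 0 (Ioi 0)) (nhds 0) := by
    have hc1 : ContinuousAt (fun α : ℝ => 1 / (α + 1)) 0 :=
      continuousAt_const.div (continuousAt_id.add continuousAt_const) (by norm_num)
    have hc2 : ContinuousAt (fun α : ℝ => Real.log (∫ x, f x ^ (α + 1))) 0 :=
      (Real.continuousAt_log (by rw [hF0]; norm_num)).comp hF_cont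
    have := (hc1.mul hc2).tendsto
    have h0 : ((fun α : ℝ => 1 / (α + 1)) * fun α : ℝ => Real.log (∫ x, f x ^ (α + 1))) 0 = 0 := by
      simp only [Pi.mul_apply, hF0, Real.log_one, mul_zero]
    rw [h0] at this
    exact this.mono_left nhdsWithin_le_nhds
  have hIoi : nhdsWithin (0:ℝ) (Ioi 0) ≤ nhdsWithin 0 {(0:ℝ)}ᶜ :=
    nhdsWithin_mono 0 fun x hx => ne_of_gt hx
  have hmem : ∀ᶠ α in nhdsWithin (0:ℝ) (Ioi 0), α ∈ Ioi (0:ℝ) :=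
    eventually_mem_nhdsWithin
  have hinv : Tendsto (fun α : ℝ => 1 / (α + 1)) (nhdsWithin 0 (Ioi 0)) (nhds 1) := by
    have hc1 : ContinuousAt (fun α : ℝ => 1 / (α + 1)) 0 :=
      continuousAt_const.div (continuousAt_id.add continuousAt_const) (by norm_num)
    have h2 := hc1.tendsto.mono_left (nhdsWithin_le_nhds (s := Ioi 0))
    rw [show (1:ℝ)/(0+1) = 1 from by norm_num] at h2
    exact h2
  -- Term 2
  have hlogG : HasDerivAt (fun α : ℝ => Real.log (∫ x, g x ^ (α + 1))) Dg 0 := by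
    have := hG_deriv.log (by rw [hG0]; norm_num)
    simpa [hG0, hg_prob] using this
  have hT2' : Tendsto (fun α : ℝ => Real.log (∫ x, g x ^ (α + 1)) / α)
      (nhdsWithin 0 (Ioi 0)) (nhds Dg) := by
    have hs := (hasDerivAt_iff_tendsto_slope.1 hlogG).mono_left hIoi
    refine hs.congr fun α => ?_
    simp [slope_def_field, hg_prob]
  have hT2 : Tendsto (fun α : ℝ => (1 / (α * (α + 1))) * Real.log (∫ x, g x ^ (α + 1)))
      (nhdsWithin 0 (Ioi 0)) (nhds Dg) := by
    have := hinv.mul hT2'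
    rw [one_mul] at this
    refine this.congr' (hmem.mono fun α hα => ?_)
    have h1 : α ≠ 0 := ne_of_gt hα
    simp only [one_div, mul_inv]
    ring
  -- Term 3
  have hlogH : HasDerivAt (fun α : ℝ => Real.log (∫ x, f x ^ α * g x)) Df 0 := by
    have := hFG_deriv.log (by rw [hH0]; norm_num)
    simpa [hH0, hg_prob] using this
  have hT3' : Tendsto (fun α : ℝ => Real.log (∫ x, f x ^ α * g x) / α)
      (nhdsWithin 0 (Ioi 0)) (nhds Df) := by
    have hs := (hasDerivAt_iff_tendsto_slope.1 hlogH).mono_left hIoi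
    refine hs.congr fun α => ?_
    simp [slope_def_field, hg_prob]
  have hT3 : Tendsto (fun α : ℝ => (1 / α) * Real.log (∫ x, f x ^ α * g x))
      (nhdsWithin 0 (Ioi 0)) (nhds Df) := by
    refine hT3'.congr fun α => ?_
    ring
  have := (hT1.add hT2).sub hT3
  rw [zero_add] at this
  rw [hKL_eq]
  exact this
end

section
/- The function α ↦ ((α+1)^{5/2}/α) exp(−(3α+2)/(2(α+1))) (the gross error sensitivity of the scale functional) is uniquely minimized over α > 0 at α = √(2/3). -/
open Real

noncomputable def Lfun (α : ℝ) : ℝ :=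
  (5/2) * Real.log (α+1) - Real.log α - (3*α+2)/(2*(α+1))

lemma hasDerivAt_Lfun {α : ℝ} (hα : 0 < α) :
    HasDerivAt Lfun ((3*α^2-2)/(2*α*(α+1)^2)) α := by
  have h1 : HasDerivAt (fun x : ℝ => Real.log (x+1)) (1/(α+1)) α := by
    have := (Real.hasDerivAt_log (by linarith : α+1 ≠ 0)).comp α
      ((hasDerivAt_id α).add_const 1)
    exact this.congr_deriv (by simp)
  have h2 : HasDerivAt Real.log (1/α) α := by
    simpa [one_div] using Real.hasDerivAt_log hα.ne'
  have h3 : HasDerivAt (fun x : ℝ => (3*x+2)/(2*(x+1))) (1/(2*(α+1)^2)) α := by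
    have hnum : HasDerivAt (fun x : ℝ => 3*x+2) 3 α := by
      simpa using ((hasDerivAt_id α).const_mul 3).add_const 2
    have hden : HasDerivAt (fun x : ℝ => 2*(x+1)) 2 α := by
      simpa using ((hasDerivAt_id α).add_const 1).const_mul 2
    have hd : (2*(α+1)) ≠ 0 := by positivity
    have := hnum.div hden hd
    refine this.congr_deriv ?_
    field_simp
    ring
  have := ((h1.const_mul (5/2)).sub h2).sub h3
  refine this.congr_deriv ?_
  have hα1 : (α+1) ≠ 0 := by linarith
  field_simp
  ring

lemma deriv_Lfun {α : ℝ} (hα : 0 < α) :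
    deriv Lfun α = (3*α^2-2)/(2*α*(α+1)^2) := (hasDerivAt_Lfun hα).deriv

lemma sqrt23_pos : 0 < Real.sqrt (2/3) := Real.sqrt_pos.mpr (by norm_num)

lemma sqrt23_sq : Real.sqrt (2/3) ^ 2 = 2/3 := Real.sq_sqrt (by norm_num)

lemma Lfun_min {α : ℝ} (hα : 0 < α) (hne : α ≠ Real.sqrt (2/3)) :
    Lfun (Real.sqrt (2/3)) < Lfun α := by
  set a := Real.sqrt (2/3) with ha
  have hapos := sqrt23_pos
  have hasq := sqrt23_sq
  rcases lt_or_gt_of_ne hne with h | h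
  · -- α < a, use strict anti on Ioc 0 a
    have hanti : StrictAntiOn Lfun (Set.Ioc 0 a) := by
      apply StrictAntiOn.mono (s := Set.Ioc 0 a)
        (strictAntiOn_of_deriv_neg (convex_Ioc 0 a) ?_ ?_) le_rfl
      · intro x hx
        exact (hasDerivAt_Lfun hx.1).continuousAt.continuousWithinAt
      · intro x hx
        rw [interior_Ioc] at hx
        have hx0 : 0 < x := hx.1
        rw [deriv_Lfun hx0]
        apply div_neg_of_neg_of_pos
        · have : x^2 < a^2 := by
            apply sq_lt_sq' (by nlinarith) hx.2
          nlinarith [hasq]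
        · positivity
    exact hanti ⟨hα, h.le⟩ ⟨hapos, le_rfl⟩ h
  · -- a < α, strict mono on Ici a
    have hmono : StrictMonoOn Lfun (Set.Ici a) := by
      apply strictMonoOn_of_deriv_pos (convex_Ici a) ?_ ?_
      · intro x hx
        have : 0 < x := lt_of_lt_of_le hapos hx
        exact (hasDerivAt_Lfun this).continuousAt.continuousWithinAt
      · intro x hx
        rw [interior_Ici] at hx
        have hx0 : 0 < x := hapos.trans hx
        rw [deriv_Lfun hx0]
        apply div_pos
        · have : a^2 < x^2 := by
            apply sq_lt_sq' (by nlinarith) hx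
          nlinarith [hasq]
        · positivity
    exact hmono Set.self_mem_Ici (le_of_lt h) h
    
lemma gamma_eq_exp {α : ℝ} (hα : 0 < α) :
    (α + 1) ^ ((5:ℝ)/2) / α * Real.exp (-(3 * α + 2) / (2 * (α + 1)))
      = Real.exp (Lfun α) := by
  have h1 : (α + 1) ^ ((5:ℝ)/2) = Real.exp ((5/2) * Real.log (α+1)) := by
    rw [Real.rpow_def_of_pos (by linarith), mul_comm]
  have h2 : (α:ℝ) = Real.exp (Real.log α) := (Real.exp_log hα).symm
  rw [h1, Lfun]
  rw [show (5/2) * Real.log (α+1) - Real.log α - (3*α+2)/(2*(α+1))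
      = (5/2) * Real.log (α+1) + (- Real.log α) + (-(3*α+2)/(2*(α+1))) by ring]
  rw [Real.exp_add, Real.exp_add, Real.exp_neg]
  rw [Real.exp_log hα]
  ring

/-- The gross error sensitivity of the scale functional,
`γ_σ(α) = (α+1)^{5/2} α⁻¹ exp(−(3α+2)/(2(α+1)))`, is uniquely minimized over `α > 0`
at `α = √(2/3)`. -/
theorem stmt_10 (γ : ℝ → ℝ)
    (hγ : ∀ α : ℝ, 0 < α →
      γ α = (α + 1) ^ ((5:ℝ)/2) / α * Real.exp (-(3 * α + 2) / (2 * (α + 1)))) :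
    ∀ α : ℝ, 0 < α → α ≠ Real.sqrt (2/3) → γ (Real.sqrt (2/3)) < γ α := by
  intro α hα hne
  rw [hγ α hα, hγ _ sqrt23_pos, gamma_eq_exp hα, gamma_eq_exp sqrt23_pos]
  exact Real.exp_lt_exp.mpr (Lfun_min hα hne)
end
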